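/- Let B² be the closed Euclidean unit disk in the plane. The largest-area parallelogram inscribed in B² has area 2, and max over x with B² ∩ (x+B²) ≠ ∅ of λ(conv(B² ∪ (x+B²))) = π + 4; consequently the ratio of the maximal convex-hull area of two intersecting translates of the disk to the area of the disk is 1 + 4/π. -/

import Mathlib

open MeasureTheory Set Pointwise ENNReal

noncomputable section

abbrev Plane := EuclideanSpace ℝ (Fin 2)

/-- 2-dimensional Lebesgue area of a plane set. -/
def area (S : Set Plane) : ℝ := (volume S).toReal

/-- Rotation by π/2 about the origin. -/
def rot (p : Plane) : Plane := WithLp.toLp 2 ![-(p 1), p 0]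

/-- A convex body: compact, convex, with nonempty interior. -/
def IsConvexBody {V : Type*} [NormedAddCommGroup V] [NormedSpace ℝ V] (K : Set V) : Prop :=
  IsCompact K ∧ Convex ℝ K ∧ (interior K).Nonempty

/-- The central symmetral (1/2)(K + (-K)) of K. -/
def centralSymmetral {V : Type*} [NormedAddCommGroup V] [NormedSpace ℝ V] (K : Set V) : Set V :=
  (2:ℝ)⁻¹ • (K + -K)

/-- A (possibly degenerate) parallelogram in the plane. -/
def IsParallelogram (P : Set Plane) : Prop :=
  ∃ c u v : Plane,
    P = (fun st : ℝ × ℝ => c + st.1 • u + st.2 • v) '' (Icc (-1:ℝ) 1 ×ˢ Icc (-1:ℝ) 1)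

def Tmap (u v : Plane) : Plane →ₗ[ℝ] Plane where
  toFun p := p 0 • u + p 1 • v
  map_add' p q := by
    simp only [PiLp.add_apply, add_smul]; abel
  map_smul' s p := by
    simp only [PiLp.smul_apply, smul_eq_mul, RingHom.id_apply, smul_smul, smul_add]

lemma Tmap_apply (u v p : Plane) : Tmap u v p = p 0 • u + p 1 • v := rfl

lemma Tmap_det (u v : Plane) :
    LinearMap.det (Tmap u v) = u 0 * v 1 - u 1 * v 0 := by
  have b := PiLp.basisFun 2 ℝ (Fin 2)
  rw [← LinearMap.det_toMatrix (PiLp.basisFun 2 ℝ (Fin 2))]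
  rw [Matrix.det_fin_two]
  simp [LinearMap.toMatrix_apply, Tmap_apply, PiLp.basisFun_apply]
  ring

def eqv : Plane ≃ᵐ ℝ × ℝ :=
  (MeasurableEquiv.toLp 2 (Fin 2 → ℝ)).symm.trans MeasurableEquiv.finTwoArrow

lemma eqv_mp : MeasurePreserving eqv volume volume :=
  (volume_preserving_finTwoArrow ℝ).comp (EuclideanSpace.volume_preserving_symm_measurableEquiv_toLp (Fin 2))

lemma eqv_apply (p : Plane) : eqv p = (p 0, p 1) := rfl

lemma vol_preimage {R : Set (ℝ × ℝ)} (hR : MeasurableSet R) :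
    volume (eqv ⁻¹' R) = volume R := eqv_mp.measure_preimage hR.nullMeasurableSet

def Sq : Set Plane := eqv ⁻¹' (Icc (-1:ℝ) 1 ×ˢ Icc (-1:ℝ) 1)

lemma mem_Sq {p : Plane} : p ∈ Sq ↔ p 0 ∈ Icc (-1:ℝ) 1 ∧ p 1 ∈ Icc (-1:ℝ) 1 := Iff.rfl

lemma vol_Sq : volume Sq = ENNReal.ofReal 4 := by
  rw [Sq, vol_preimage (measurableSet_Icc.prod measurableSet_Icc)]
  rw [Measure.volume_eq_prod, Measure.prod_prod, Real.volume_Icc]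
  rw [← ENNReal.ofReal_mul (by norm_num)]
  norm_num

lemma par_eq (c u v : Plane) :
    (fun st : ℝ × ℝ => c + st.1 • u + st.2 • v) '' (Icc (-1:ℝ) 1 ×ˢ Icc (-1:ℝ) 1)
      = c +ᵥ (Tmap u v '' Sq) := by
  ext x
  constructor
  · rintro ⟨⟨s, t⟩, ⟨hs, ht⟩, rfl⟩
    refine ⟨Tmap u v (WithLp.toLp 2 ![s, t] : Plane), ⟨(WithLp.toLp 2 ![s, t] : Plane), ?_, rfl⟩, ?_⟩
    · exact mem_Sq.2 ⟨hs, ht⟩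
    · show c + _ = _
      simp [Tmap_apply]
      abel
  · rintro ⟨-, ⟨q, hq, rfl⟩, rfl⟩
    exact ⟨(q 0, q 1), mem_Sq.1 hq, by show c + _ • u + _ • v = _; simp [Tmap_apply]; abel⟩

lemma vol_par (c u v : Plane) :
    volume ((fun st : ℝ × ℝ => c + st.1 • u + st.2 • v) '' (Icc (-1:ℝ) 1 ×ˢ Icc (-1:ℝ) 1))
      = ENNReal.ofReal (|u 0 * v 1 - u 1 * v 0| * 4) := by
  rw [par_eq, measure_vadd, Measure.addHaar_image_linearMap, Tmap_det, vol_Sq,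
    ← ENNReal.ofReal_mul (abs_nonneg _)]

lemma area_par (c u v : Plane) :
    area ((fun st : ℝ × ℝ => c + st.1 • u + st.2 • v) '' (Icc (-1:ℝ) 1 ×ˢ Icc (-1:ℝ) 1))
      = |u 0 * v 1 - u 1 * v 0| * 4 := by
  rw [area, vol_par, ENNReal.toReal_ofReal (by positivity)]

lemma coords_le {a : Plane} (h : ‖a‖ ≤ 1) : a 0 ^ 2 + a 1 ^ 2 ≤ 1 := by
  have h0 : (0:ℝ) ≤ a 0 ^ 2 + a 1 ^ 2 := by positivity
  rw [EuclideanSpace.norm_eq] at h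
  simp only [Fin.sum_univ_two, Real.norm_eq_abs, sq_abs] at h
  nlinarith [Real.sq_sqrt h0, Real.sqrt_nonneg (a 0 ^ 2 + a 1 ^ 2)]

lemma norm_le_of_coords {a : Plane} (h : a 0 ^ 2 + a 1 ^ 2 ≤ 1) : ‖a‖ ≤ 1 := by
  rw [EuclideanSpace.norm_eq]
  simp only [Fin.sum_univ_two, Real.norm_eq_abs, sq_abs]
  exact Real.sqrt_le_one.2 h


def B2 : Set Plane := Metric.closedBall 0 1

lemma nsq (a : Plane) : ‖a‖ ^ 2 = a 0 ^ 2 + a 1 ^ 2 := by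
  rw [EuclideanSpace.norm_eq, Real.sq_sqrt (by positivity)]
  simp [Fin.sum_univ_two, sq_abs]

lemma vol_image_isometry (e : Plane ≃ₗᵢ[ℝ] Plane) (S : Set Plane) :
    volume (e '' S) = volume S := by
  have h := e.measurePreserving
  have : (e '' S) = e.toMeasurableEquiv.symm ⁻¹' S := by
    ext p
    show p ∈ e '' S ↔ e.symm p ∈ S
    constructor
    · rintro ⟨q, hq, rfl⟩; simpa using hq
    · intro hq; exact ⟨e.symm p, hq, by simp⟩
  rw [this, ← MeasurableEquiv.map_apply, (h.symm e.toMeasurableEquiv).map_eq]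

def vecP (a b : ℝ) : Plane := WithLp.toLp 2 ![a, b]

@[simp] lemma vecP0 (a b : ℝ) : vecP a b 0 = a := rfl
@[simp] lemma vecP1 (a b : ℝ) : vecP a b 1 = b := rfl

lemma plane_ext {a b : Plane} (h0 : a 0 = b 0) (h1 : a 1 = b 1) : a = b := by
  ext i; fin_cases i <;> assumption

lemma rot_vol (x : Plane) :
    volume (segment ℝ 0 x + B2) = volume (segment ℝ 0 (vecP ‖x‖ 0) + B2) := by
  by_cases hx : x = 0
  · subst hx
    have h00 : vecP ‖(0:Plane)‖ 0 = (0 : Plane) := by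
      apply plane_ext <;> simp
    rw [h00]
  · set r := ‖x‖ with hr
    set w : Plane := vecP r 0 with hw
    have hw0 : w 0 = r := rfl
    have hw1 : w 1 = 0 := rfl
    have hr0 : 0 < r := norm_pos_iff.2 hx
    have hrsq : x 0 ^ 2 + x 1 ^ 2 = r ^ 2 := by rw [← nsq]
    set u : Plane := vecP (x 0 / r) (x 1 / r) with hu
    set v : Plane := vecP (-(x 1) / r) (x 0 / r) with hv
    have hu0 : u 0 = x 0 / r := rfl
    have hu1 : u 1 = x 1 / r := rfl
    have hv0 : v 0 = -(x 1) / r := rfl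
    have hv1 : v 1 = x 0 / r := rfl
    have hnorm : ∀ p : Plane, ‖Tmap u v p‖ = ‖p‖ := by
      intro p
      have h1 : ‖Tmap u v p‖ ^ 2 = ‖p‖ ^ 2 := by
        rw [nsq, nsq]
        show (p 0 • u + p 1 • v) 0 ^ 2 + (p 0 • u + p 1 • v) 1 ^ 2 = _
        simp only [PiLp.add_apply, PiLp.smul_apply, smul_eq_mul, hu0, hu1, hv0, hv1]
        field_simp
        nlinarith [hrsq]
      exact (sq_eq_sq₀ (norm_nonneg _) (norm_nonneg _)).1 h1
    set li : Plane →ₗᵢ[ℝ] Plane := ⟨Tmap u v, hnorm⟩ with hli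
    set e : Plane ≃ₗᵢ[ℝ] Plane := li.toLinearIsometryEquiv rfl with he
    have heapp : ∀ p, e p = Tmap u v p := fun p => rfl
    have hew : e w = x := by
      rw [heapp]
      show w 0 • u + w 1 • v = x
      apply plane_ext <;>
        simp only [PiLp.add_apply, PiLp.smul_apply, smul_eq_mul, hu0, hu1, hv0, hv1, hw0, hw1] <;>
        field_simp <;> ring
    have himg : (e : Plane → Plane) '' (segment ℝ 0 w + B2) = segment ℝ 0 x + B2 := by
      have hseg : (e : Plane → Plane) '' segment ℝ 0 w = segment ℝ 0 x := by
        have := image_segment ℝ (e.toLinearEquiv.toLinearMap.toAffineMap) 0 w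
        simpa [hew] using this
      have hball : (e : Plane → Plane) '' B2 = B2 := by
        rw [show B2 = Metric.closedBall (0:Plane) 1 from rfl, e.image_closedBall, map_zero]
      rw [show segment ℝ 0 w + B2 = Set.image2 (· + ·) (segment ℝ 0 w) B2 from rfl,
        Set.image_image2_distrib (fun a b => map_add e a b), hseg, hball]
      rfl
    rw [← himg, vol_image_isometry]

lemma mem_B2 {p : Plane} : p ∈ B2 ↔ p 0 ^ 2 + p 1 ^ 2 ≤ 1 := by
  constructor
  · intro h
    exact coords_le (by rwa [B2, Metric.mem_closedBall, dist_zero_right] at h)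
  · intro h
    rw [B2, Metric.mem_closedBall, dist_zero_right]
    exact norm_le_of_coords h

lemma mem_seg {r : ℝ} (hr : 0 ≤ r) {q : Plane} :
    q ∈ segment ℝ 0 (vecP r 0) ↔ ∃ s : ℝ, 0 ≤ s ∧ s ≤ r ∧ q = vecP s 0 := by
  rw [segment_eq_image]
  constructor
  · rintro ⟨t, ⟨ht0, ht1⟩, rfl⟩
    refine ⟨t * r, mul_nonneg ht0 hr, by nlinarith, ?_⟩
    apply plane_ext <;> simp
  · rintro ⟨s, hs0, hsr, rfl⟩
    rcases eq_or_lt_of_le hr with h | h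
    · refine ⟨0, by norm_num, ?_⟩
      have : s = 0 := le_antisymm (by linarith) hs0
      apply plane_ext <;> simp [this, ← h]
    · refine ⟨s / r, ⟨by positivity, by rw [div_le_one h]; exact hsr⟩, ?_⟩
      apply plane_ext <;> simp
      field_simp

lemma stadium_eq (r : ℝ) (hr : 0 ≤ r) :
    segment ℝ 0 (vecP r 0) + B2 =
      {p : Plane | p 1 ∈ Icc (-1:ℝ) 1 ∧
        p 0 ∈ Icc (-Real.sqrt (1 - p 1 ^ 2)) (r + Real.sqrt (1 - p 1 ^ 2))} := by
  ext p
  constructor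
  · rintro ⟨q, hq, b, hb, rfl⟩
    obtain ⟨s, hs0, hsr, rfl⟩ := (mem_seg hr).1 hq
    rw [mem_B2] at hb
    show (vecP s 0 + b) ∈ _
    have hb1 : (b 1) ^ 2 ≤ 1 := by nlinarith [sq_nonneg (b 0)]
    have hy : ((vecP s 0 + b) 1) = b 1 := by simp [PiLp.add_apply]
    have hx : ((vecP s 0 + b) 0) = s + b 0 := by simp [PiLp.add_apply]
    have hWnn : 0 ≤ Real.sqrt (1 - b 1 ^ 2) := Real.sqrt_nonneg _
    have hW : Real.sqrt (1 - b 1 ^ 2) ^ 2 = 1 - b 1 ^ 2 :=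
      Real.sq_sqrt (by nlinarith)
    have hb0 : b 0 ^ 2 ≤ Real.sqrt (1 - b 1 ^ 2) ^ 2 := by rw [hW]; nlinarith
    have habs : -Real.sqrt (1 - b 1 ^ 2) ≤ b 0 ∧ b 0 ≤ Real.sqrt (1 - b 1 ^ 2) :=
      abs_le_of_sq_le_sq' hb0 hWnn
    constructor
    · rw [hy]
      constructor <;> nlinarith
    · rw [hx, hy]
      constructor <;> [linarith [habs.1]; linarith [habs.2]]
  · rintro ⟨⟨hy1, hy2⟩, hx1, hx2⟩
    set W := Real.sqrt (1 - p 1 ^ 2) with hWdef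
    have hWnn : 0 ≤ W := Real.sqrt_nonneg _
    have hW : W ^ 2 = 1 - p 1 ^ 2 := Real.sq_sqrt (by nlinarith)
    set s := max 0 (min r (p 0)) with hs
    have hs0 : 0 ≤ s := le_max_left _ _
    have hsr : s ≤ r := max_le hr (min_le_left _ _)
    have hkey : (p 0 - s) ^ 2 ≤ W ^ 2 := by
      rcases le_total (p 0) 0 with h | h
      · have : s = 0 := by
          rw [hs, min_eq_right (le_trans h hr) |>.symm]
          · simp [max_eq_left, min_eq_right (le_trans h hr), h]
        rw [this]
        nlinarith
      · rcases le_total (p 0) r with h2 | h2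
        · have : s = p 0 := by rw [hs, min_eq_right h2, max_eq_right h]
          rw [this]
          nlinarith
        · have : s = r := by rw [hs, min_eq_left h2, max_eq_right hr]
          rw [this]
          nlinarith
    refine ⟨vecP s 0, (mem_seg hr).2 ⟨s, hs0, hsr, rfl⟩, p - vecP s 0, ?_, by module⟩
    rw [mem_B2]
    have e0 : (p - vecP s 0) 0 = p 0 - s := by simp [PiLp.sub_apply]
    have e1 : (p - vecP s 0) 1 = p 1 := by simp [PiLp.sub_apply]
    rw [e0, e1]
    nlinarith

def Reg (r : ℝ) : Set (ℝ × ℝ) :=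
  {q : ℝ × ℝ | q.1 ∈ Icc (-1:ℝ) 1 ∧
    q.2 ∈ Icc (-Real.sqrt (1 - q.1 ^ 2)) (r + Real.sqrt (1 - q.1 ^ 2))}

lemma contW : Continuous fun a : ℝ => Real.sqrt (1 - a ^ 2) :=
  Real.continuous_sqrt.comp (continuous_const.sub (continuous_pow 2))

lemma Reg_meas (r : ℝ) : MeasurableSet (Reg r) := by
  apply MeasurableSet.inter
  · exact measurable_fst measurableSet_Icc
  · apply MeasurableSet.inter
    · exact measurableSet_le ((contW.comp continuous_fst).neg.measurable) measurable_snd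
    · exact measurableSet_le measurable_snd
        ((continuous_const.add (contW.comp continuous_fst)).measurable)

lemma vol_Reg (r : ℝ) (hr : 0 ≤ r) :
    volume (Reg r) = ENNReal.ofReal (Real.pi + 2 * r) := by
  rw [Measure.volume_eq_prod, Measure.prod_apply (Reg_meas r)]
  have hslice : ∀ a : ℝ, volume (Prod.mk a ⁻¹' Reg r) =
      (Icc (-1:ℝ) 1).indicator (fun a => ENNReal.ofReal (r + 2 * Real.sqrt (1 - a ^ 2))) a := by
    intro a
    by_cases ha : a ∈ Icc (-1:ℝ) 1
    · rw [indicator_of_mem ha]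
      have hpre : Prod.mk a ⁻¹' Reg r
          = Icc (-Real.sqrt (1 - a ^ 2)) (r + Real.sqrt (1 - a ^ 2)) := by
        ext t
        simp only [Reg, mem_preimage, mem_setOf_eq, ha, true_and]
      rw [hpre, Real.volume_Icc]
      congr 1
      ring
    · rw [indicator_of_notMem ha]
      have hpre : Prod.mk a ⁻¹' Reg r = ∅ := by
        ext t
        simp only [Reg, mem_preimage, mem_setOf_eq, ha, false_and, mem_empty_iff_false]
      rw [hpre, measure_empty]
  rw [lintegral_congr hslice, lintegral_indicator measurableSet_Icc]
  rw [← ofReal_integral_eq_lintegral_ofReal]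
  · congr 1
    have h1 : ∫ a in Icc (-1:ℝ) 1, (r + 2 * Real.sqrt (1 - a ^ 2))
        = ∫ a in (-1:ℝ)..1, (r + 2 * Real.sqrt (1 - a ^ 2)) := by
      rw [intervalIntegral.integral_of_le (by norm_num : (-1:ℝ) ≤ 1),
        MeasureTheory.integral_Icc_eq_integral_Ioc]
    rw [h1, intervalIntegral.integral_add (f := fun _ => r) (g := fun a => 2 * Real.sqrt (1 - a ^ 2)) (intervalIntegrable_const)
      (((continuous_const.mul contW)).intervalIntegrable _ _)]
    rw [intervalIntegral.integral_const, intervalIntegral.integral_const_mul,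
      integral_sqrt_one_sub_sq]
    simp
    ring
  · exact ((continuous_const.add (continuous_const.mul contW)).integrableOn_Icc)
  · filter_upwards with a
    positivity


def eqv' : Plane ≃ᵐ ℝ × ℝ := eqv.trans ((MeasurableEquiv.prodComm : ℝ × ℝ ≃ᵐ ℝ × ℝ))

lemma eqv'_apply (p : Plane) : eqv' p = (p 1, p 0) := rfl

lemma eqv'_mp : MeasurePreserving eqv' volume volume := by
  have h2 : MeasurePreserving ((MeasurableEquiv.prodComm : ℝ × ℝ ≃ᵐ ℝ × ℝ))
      (volume : Measure (ℝ × ℝ)) volume := by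
    refine ⟨((MeasurableEquiv.prodComm : ℝ × ℝ ≃ᵐ ℝ × ℝ)).measurable, ?_⟩
    rw [Measure.volume_eq_prod, show ⇑(MeasurableEquiv.prodComm : ℝ × ℝ ≃ᵐ ℝ × ℝ) = Prod.swap from rfl,
      Measure.measurePreserving_swap.map_eq, ← Measure.volume_eq_prod]
  exact h2.comp eqv_mp

lemma vol_stadium (r : ℝ) (hr : 0 ≤ r) :
    volume (segment ℝ 0 (vecP r 0) + B2) = ENNReal.ofReal (Real.pi + 2 * r) := by
  rw [stadium_eq r hr]
  have hset : {p : Plane | p 1 ∈ Icc (-1:ℝ) 1 ∧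
        p 0 ∈ Icc (-Real.sqrt (1 - p 1 ^ 2)) (r + Real.sqrt (1 - p 1 ^ 2))}
      = eqv' ⁻¹' Reg r := by
    ext p
    simp only [mem_preimage, eqv'_apply, Reg, mem_setOf_eq]
  rw [hset, eqv'_mp.measure_preimage (Reg_meas r).nullMeasurableSet, vol_Reg r hr]

lemma hull_eq (x : Plane) :
    convexHull ℝ (B2 ∪ (x +ᵥ B2)) = segment ℝ 0 x + B2 := by
  apply le_antisymm
  · apply convexHull_min
    · rintro p (hp | hp)
      · exact ⟨0, left_mem_segment ℝ 0 x, p, hp, by simp⟩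
      · obtain ⟨b, hb, rfl⟩ := hp
        exact ⟨x, right_mem_segment ℝ 0 x, b, hb, rfl⟩
    · exact (convex_segment 0 x).add (convex_closedBall 0 1)
  · rintro p ⟨q, hq, b, hb, rfl⟩
    rw [segment_eq_image] at hq
    obtain ⟨t, ⟨ht0, ht1⟩, rfl⟩ := hq
    have h1 : b ∈ convexHull ℝ (B2 ∪ (x +ᵥ B2)) :=
      subset_convexHull ℝ _ (Or.inl hb)
    have h2 : x + b ∈ convexHull ℝ (B2 ∪ (x +ᵥ B2)) :=
      subset_convexHull ℝ _ (Or.inr ⟨b, hb, rfl⟩)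
    have hc := (convex_convexHull ℝ (B2 ∪ (x +ᵥ B2))) h1 h2
      (by linarith : (0:ℝ) ≤ 1 - t) ht0 (by ring)
    convert hc using 1
    show ((1 - t) • (0:Plane) + t • x) + b = (1 - t) • b + t • (x + b)
    module

lemma vol_hull (x : Plane) :
    volume (convexHull ℝ (B2 ∪ (x +ᵥ B2))) = ENNReal.ofReal (Real.pi + 2 * ‖x‖) := by
  rw [hull_eq, rot_vol, vol_stadium ‖x‖ (norm_nonneg x)]

lemma area_hull (x : Plane) :
    area (convexHull ℝ (B2 ∪ (x +ᵥ B2))) = Real.pi + 2 * ‖x‖ := by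
  rw [area, vol_hull, ENNReal.toReal_ofReal (by positivity)]

lemma area_B2 : area B2 = Real.pi := by
  have h0 : vecP 0 0 = (0:Plane) := plane_ext (by simp) (by simp)
  have hB : B2 = segment ℝ 0 (vecP 0 0) + B2 := by
    rw [h0, segment_same, Set.singleton_add]
    simp
  rw [area, hB, vol_stadium 0 le_rfl, mul_zero, add_zero,
    ENNReal.toReal_ofReal Real.pi_pos.le]

lemma norm_vecP (a : ℝ) (ha : 0 ≤ a) : ‖vecP a 0‖ = a := by
  have h := nsq (vecP a 0)
  simp only [vecP0, vecP1] at h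
  nlinarith [norm_nonneg (vecP a 0), h]

lemma sSup_eq :
    sSup {A : ℝ | ∃ x : Plane, (Metric.closedBall (0:Plane) 1 ∩ (x +ᵥ Metric.closedBall (0:Plane) 1)).Nonempty ∧
        A = area (convexHull ℝ (Metric.closedBall 0 1 ∪ (x +ᵥ Metric.closedBall (0:Plane) 1)))} =
      Real.pi + 4 := by
  have hmem : (Real.pi + 4) ∈ {A : ℝ | ∃ x : Plane,
      (Metric.closedBall (0:Plane) 1 ∩ (x +ᵥ Metric.closedBall (0:Plane) 1)).Nonempty ∧
      A = area (convexHull ℝ (Metric.closedBall 0 1 ∪ (x +ᵥ Metric.closedBall (0:Plane) 1)))} := by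
    refine ⟨vecP 2 0, ⟨vecP 1 0, ?_, ?_⟩, ?_⟩
    · rw [Metric.mem_closedBall, dist_zero_right]
      exact norm_le_of_coords (by norm_num)
    · refine Set.mem_vadd_set.2 ⟨vecP (-1) 0, ?_, ?_⟩
      · rw [Metric.mem_closedBall, dist_zero_right]
        exact norm_le_of_coords (by norm_num)
      · show vecP 2 0 + vecP (-1) 0 = vecP 1 0
        apply plane_ext <;> simp [PiLp.add_apply] <;> norm_num
    · rw [show (Metric.closedBall (0:Plane) 1) = B2 from rfl, area_hull,
        norm_vecP 2 (by norm_num)]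
      norm_num
  have hub : ∀ A ∈ {A : ℝ | ∃ x : Plane,
      (Metric.closedBall (0:Plane) 1 ∩ (x +ᵥ Metric.closedBall (0:Plane) 1)).Nonempty ∧
      A = area (convexHull ℝ (Metric.closedBall 0 1 ∪ (x +ᵥ Metric.closedBall (0:Plane) 1)))},
      A ≤ Real.pi + 4 := by
    rintro A ⟨x, ⟨p, hp1, hp2⟩, rfl⟩
    rw [show (Metric.closedBall (0:Plane) 1) = B2 from rfl, area_hull]
    obtain ⟨b, hb, rfl⟩ := hp2
    rw [Metric.mem_closedBall, dist_zero_right] at hb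
    rw [Metric.mem_closedBall, dist_zero_right] at hp1
    have hx : ‖x‖ ≤ 2 := by
      have h := norm_sub_le (x + b) b
      rw [show x + b - b = x by module] at h
      have hvb : ‖x +ᵥ b‖ = ‖x + b‖ := rfl
      rw [hvb] at hp1
      linarith
    linarith
  exact le_antisymm (csSup_le ⟨Real.pi + 4, hmem⟩ hub)
    (le_csSup ⟨Real.pi + 4, fun A hA => hub A hA⟩ hmem)

/-- For the closed unit disk B²: the largest inscribed parallelogram has area 2, the
maximal area of the convex hull of two intersecting translates is π + 4, and the ratio
of this maximum to the area of the disk is 1 + 4/π. -/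
theorem unit_disk_translates :
    (∀ Q : Set Plane, IsParallelogram Q → Q ⊆ Metric.closedBall 0 1 → area Q ≤ 2) ∧
    (∃ P : Set Plane, IsParallelogram P ∧ P ⊆ Metric.closedBall 0 1 ∧ area P = 2) ∧
    sSup {A : ℝ | ∃ x : Plane, (Metric.closedBall (0:Plane) 1 ∩ (x +ᵥ Metric.closedBall (0:Plane) 1)).Nonempty ∧
        A = area (convexHull ℝ (Metric.closedBall 0 1 ∪ (x +ᵥ Metric.closedBall (0:Plane) 1)))} =
      Real.pi + 4 ∧
    sSup {A : ℝ | ∃ x : Plane, (Metric.closedBall (0:Plane) 1 ∩ (x +ᵥ Metric.closedBall (0:Plane) 1)).Nonempty ∧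
        A = area (convexHull ℝ (Metric.closedBall 0 1 ∪ (x +ᵥ Metric.closedBall (0:Plane) 1)))} /
      area (Metric.closedBall 0 1) = 1 + 4 / Real.pi := by
  refine ⟨?_, ?_, sSup_eq, ?_⟩
  · rintro Q ⟨c, u, v, rfl⟩ hsub
    rw [area_par]
    have key : ∀ s t : ℝ, s ∈ Icc (-1:ℝ) 1 → t ∈ Icc (-1:ℝ) 1 → ‖c + s • u + t • v‖ ≤ 1 := by
      intro s t hs ht
      have := hsub ⟨(s, t), ⟨hs, ht⟩, rfl⟩
      rwa [Metric.mem_closedBall, dist_zero_right] at this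
    have h1 : ‖c + u + v‖ ≤ 1 := by simpa using key 1 1 (by norm_num) (by norm_num)
    have h2 : ‖c - u - v‖ ≤ 1 := by
      have := key (-1) (-1) (by norm_num) (by norm_num)
      simpa [neg_smul, one_smul, sub_eq_add_neg] using this
    have h3 : ‖c + u - v‖ ≤ 1 := by
      have := key 1 (-1) (by norm_num) (by norm_num)
      simpa [neg_smul, one_smul, sub_eq_add_neg] using this
    have h4 : ‖c - u + v‖ ≤ 1 := by
      have := key (-1) 1 (by norm_num) (by norm_num)
      simpa [neg_smul, one_smul, sub_eq_add_neg] using this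
    have ea : (c + u + v) - (c - u - v) = (2:ℝ) • (u + v) := by module
    have eb : (c + u - v) - (c - u + v) = (2:ℝ) • (u - v) := by module
    have ha : ‖u + v‖ ≤ 1 := by
      have := norm_sub_le (c + u + v) (c - u - v)
      rw [ea, norm_smul] at this
      simp only [Real.norm_ofNat] at this
      linarith
    have hb : ‖u - v‖ ≤ 1 := by
      have := norm_sub_le (c + u - v) (c - u + v)
      rw [eb, norm_smul] at this
      simp only [Real.norm_ofNat] at this
      linarith
    have ca := coords_le ha
    have cb := coords_le hb
    simp only [PiLp.add_apply, PiLp.sub_apply] at ca cb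
    have hd : (u 0 * v 1 - u 1 * v 0) ^ 2 ≤ (1/2)^2 := by
      nlinarith [sq_nonneg ((u 0 + v 0) * (u 0 - v 0) + (u 1 + v 1) * (u 1 - v 1)),
        sq_nonneg ((u 0 + v 0) * (u 1 - v 1) - (u 1 + v 1) * (u 0 - v 0)),
        mul_nonneg (by positivity : (0:ℝ) ≤ (u 0 + v 0)^2 + (u 1 + v 1)^2)
          (by positivity : (0:ℝ) ≤ (u 0 - v 0)^2 + (u 1 - v 1)^2)]
    have : |u 0 * v 1 - u 1 * v 0| ≤ 1/2 := by
      rw [abs_le]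
      exact abs_le_of_sq_le_sq' hd (by norm_num)
    linarith [abs_nonneg (u 0 * v 1 - u 1 * v 0), this]
  · refine ⟨_, ⟨0, (WithLp.toLp 2 ![1/2, 1/2] : Plane), (WithLp.toLp 2 ![-(1/2), 1/2] : Plane), rfl⟩, ?_, ?_⟩
    · rintro x ⟨⟨s, t⟩, ⟨hs, ht⟩, rfl⟩
      rw [Metric.mem_closedBall, dist_zero_right]
      apply norm_le_of_coords
      simp only [PiLp.add_apply, PiLp.smul_apply, PiLp.zero_apply, smul_eq_mul,
        Matrix.cons_val_zero, Matrix.cons_val_one, Matrix.head_cons]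
      obtain ⟨hs1, hs2⟩ := hs
      obtain ⟨ht1, ht2⟩ := ht
      nlinarith [sq_nonneg s, sq_nonneg t]
    · rw [area_par]
      simp only [Matrix.cons_val_zero, Matrix.cons_val_one, Matrix.head_cons]
      rw [show (1:ℝ)/2 * (1/2) - 1/2 * -(1/2) = 1/2 by ring,
        abs_of_pos (by norm_num : (0:ℝ) < 1/2)]
      norm_num
  · rw [sSup_eq, show (Metric.closedBall (0:Plane) 1) = B2 from rfl, area_B2]
    field_simp
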